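/- arXiv:0809.0744 — 3 statements merged into one kernel-verified Lean document; each statement's English description precedes it below -/
import Mathlib

section
/- Let (X, d) be a compact quasihypermetric space and μ a signed Borel measure of total mass 1 such that d_μ(x) = c for all x ∈ X (μ is d-invariant with value c). Then I(μ) = c and I(ν) ≤ c for every signed Borel measure ν of total mass 1; that is, μ is maximal and M(X) = c. -/
open MeasureTheory

/-- Integral of a function against a finite signed Borel measure, via Jordan decomposition. -/
noncomputable def sInt {X : Type*} [MeasurableSpace X] (μ : SignedMeasure X) (f : X → ℝ) : ℝ :=
  (∫ x, f x ∂μ.toJordanDecomposition.posPart) - ∫ x, f x ∂μ.toJordanDecomposition.negPart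

/-- Energy `I(μ, ν) = ∫∫ d(x,y) dμ(x) dν(y)` with respect to a kernel `d`. -/
noncomputable def en {X : Type*} [MeasurableSpace X] (d : X → X → ℝ)
    (μ ν : SignedMeasure X) : ℝ :=
  sInt μ (fun x => sInt ν (fun y => d x y))

/-- The potential `d_μ(x) = ∫ d(x,y) dμ(y)`. -/
noncomputable def dPot {X : Type*} [MeasurableSpace X] (d : X → X → ℝ)
    (μ : SignedMeasure X) (x : X) : ℝ :=
  sInt μ (fun y => d x y)

/-- The set of energies `I(μ)` of signed Borel measures of total mass one. -/
noncomputable def MSet (X : Type*) [MetricSpace X] [MeasurableSpace X] : Set ℝ :=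
  {r | ∃ μ : SignedMeasure X, μ Set.univ = (1 : ℝ) ∧ en (fun x y => dist x y) μ μ = r}

section Aux

set_option linter.unusedSectionVars false

variable {X : Type*} [MetricSpace X] [CompactSpace X] [MeasurableSpace X] [BorelSpace X]

lemma contInt {Y : Type*} [TopologicalSpace Y] [CompactSpace Y] [MeasurableSpace Y]
    [OpensMeasurableSpace Y] {f : Y → ℝ} (hf : Continuous f) (m : Measure Y)
    [IsFiniteMeasure m] : Integrable f m :=
  hf.integrable_of_hasCompactSupport (HasCompactSupport.of_compactSpace f)

lemma sMeas_apply (μ : SignedMeasure X) {s : Set X} (hs : MeasurableSet s) :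
    μ s = (μ.toJordanDecomposition.posPart s).toReal -
      (μ.toJordanDecomposition.negPart s).toReal := by
  conv_lhs => rw [← μ.toSignedMeasure_toJordanDecomposition]
  rw [JordanDecomposition.toSignedMeasure, VectorMeasure.sub_apply,
    Measure.toSignedMeasure_apply_measurable hs, Measure.toSignedMeasure_apply_measurable hs]
  rfl

lemma contPot (m : Measure X) [IsFiniteMeasure m] :
    Continuous fun x : X => ∫ y, dist x y ∂m := by
  have : LipschitzWith (m Set.univ).toNNReal (fun x : X => ∫ y, dist x y ∂m) := by
    apply LipschitzWith.of_dist_le_mul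
    intro x x'
    have h1 : Integrable (fun y => dist x y) m :=
      contInt (Continuous.dist continuous_const continuous_id) m
    have h2 : Integrable (fun y => dist x' y) m :=
      contInt (Continuous.dist continuous_const continuous_id) m
    rw [Real.dist_eq, ← integral_sub h1 h2]
    calc |∫ y, (dist x y - dist x' y) ∂m| ≤ ∫ y, |dist x y - dist x' y| ∂m := by
          simpa [Real.norm_eq_abs] using
            norm_integral_le_integral_norm (fun y => dist x y - dist x' y)
      _ ≤ ∫ _y, dist x x' ∂m := by
          apply integral_mono (h1.sub h2).abs (integrable_const _)
          intro y
          exact abs_dist_sub_le x x' y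
      _ = (m Set.univ).toReal * dist x x' := by rw [integral_const]; simp [smul_eq_mul, Measure.real]
      _ = ((m Set.univ).toNNReal : ℝ) * dist x x' := by
          simp [ENNReal.coe_toNNReal (measure_ne_top m _), ENNReal.coe_toNNReal_eq_toReal]
  exact this.continuous

lemma sInt_const (μ : SignedMeasure X) (c : ℝ) :
    sInt μ (fun _ => c) = c * μ Set.univ := by
  rw [sMeas_apply μ MeasurableSet.univ]
  simp [sInt, integral_const, smul_eq_mul, Measure.real]
  ring

lemma sInt_sub' (μ : SignedMeasure X) {f g : X → ℝ} (hf : Continuous f) (hg : Continuous g) :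
    sInt μ (fun x => f x - g x) = sInt μ f - sInt μ g := by
  simp only [sInt, integral_sub (contInt hf _) (contInt hg _)]
  ring

lemma jordan_add (ν μ : SignedMeasure X) :
    (ν - μ).toJordanDecomposition.posPart + (ν.toJordanDecomposition.negPart +
      μ.toJordanDecomposition.posPart)
    = (ν - μ).toJordanDecomposition.negPart + (ν.toJordanDecomposition.posPart +
      μ.toJordanDecomposition.negPart) := by
  ext s hs
  have h1 := sMeas_apply (ν - μ) hs
  have h2 := sMeas_apply ν hs
  have h3 := sMeas_apply μ hs
  have h4 : (ν - μ) s = ν s - μ s := VectorMeasure.sub_apply _ _ _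
  have key : ((ν - μ).toJordanDecomposition.posPart s).toReal +
      ((ν.toJordanDecomposition.negPart s).toReal + (μ.toJordanDecomposition.posPart s).toReal) =
      ((ν - μ).toJordanDecomposition.negPart s).toReal +
      ((ν.toJordanDecomposition.posPart s).toReal +
        (μ.toJordanDecomposition.negPart s).toReal) := by
    linarith [h1, h2, h3, h4]
  simp only [Measure.add_apply]
  rw [← ENNReal.toReal_eq_toReal_iff' (by finiteness) (by finiteness)]
  rw [ENNReal.toReal_add (by finiteness) (by finiteness),
      ENNReal.toReal_add (by finiteness) (by finiteness),
      ENNReal.toReal_add (by finiteness) (by finiteness),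
      ENNReal.toReal_add (by finiteness) (by finiteness)]
  exact key

lemma sInt_measure_sub (ν μ : SignedMeasure X) {f : X → ℝ} (hf : Continuous f) :
    sInt (ν - μ) f = sInt ν f - sInt μ f := by
  have key : ∫ x, f x ∂((ν - μ).toJordanDecomposition.posPart +
      (ν.toJordanDecomposition.negPart + μ.toJordanDecomposition.posPart)) =
      ∫ x, f x ∂((ν - μ).toJordanDecomposition.negPart +
      (ν.toJordanDecomposition.posPart + μ.toJordanDecomposition.negPart)) := by
    rw [jordan_add]
  rw [integral_add_measure (contInt hf _) (contInt hf _),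
      integral_add_measure (contInt hf _) (contInt hf _),
      integral_add_measure (contInt hf _) (contInt hf _),
      integral_add_measure (contInt hf _) (contInt hf _)] at key
  simp only [sInt]
  linarith

lemma swap_int (a b : Measure X) [IsFiniteMeasure a] [IsFiniteMeasure b] :
    ∫ x, ∫ y, dist x y ∂b ∂a = ∫ x, ∫ y, dist x y ∂a ∂b := by
  rw [integral_integral_swap (contInt continuous_dist (a.prod b))]
  simp_rw [dist_comm]

lemma en_symm (μ ν : SignedMeasure X) :
    en (fun x y => dist x y) μ ν = en (fun x y => dist x y) ν μ := by
  simp only [en, sInt]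
  rw [integral_sub (contInt (contPot _) _) (contInt (contPot _) _),
      integral_sub (contInt (contPot _) _) (contInt (contPot _) _),
      integral_sub (contInt (contPot _) _) (contInt (contPot _) _),
      integral_sub (contInt (contPot _) _) (contInt (contPot _) _)]
  rw [swap_int μ.toJordanDecomposition.posPart ν.toJordanDecomposition.posPart,
      swap_int μ.toJordanDecomposition.posPart ν.toJordanDecomposition.negPart,
      swap_int μ.toJordanDecomposition.negPart ν.toJordanDecomposition.posPart,
      swap_int μ.toJordanDecomposition.negPart ν.toJordanDecomposition.negPart]
  ring

lemma en_eq {Y : Type*} [MeasurableSpace Y] (d : Y → Y → ℝ) (a b : SignedMeasure Y) :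
    en d a b = sInt a (dPot d b) := rfl

lemma contDPot (ν : SignedMeasure X) :
    Continuous (dPot (fun x y => dist x y) ν) :=
  (contPot ν.toJordanDecomposition.posPart).sub (contPot ν.toJordanDecomposition.negPart)

end Aux

/-- In a compact quasihypermetric space, a mass-one signed measure whose potential is
constant with value `c` has energy `c`, and `c` is the supremum `M(X)` of the energies. -/
theorem stmt1 {X : Type*} [MetricSpace X] [CompactSpace X] [MeasurableSpace X] [BorelSpace X]
    (hq : ∀ ν : SignedMeasure X, ν Set.univ = (0 : ℝ) → en (fun x y => dist x y) ν ν ≤ 0)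
    (μ : SignedMeasure X) (hμ : μ Set.univ = (1 : ℝ)) (c : ℝ)
    (hinv : ∀ x : X, dPot (fun x y => dist x y) μ x = c) :
    en (fun x y => dist x y) μ μ = c ∧ IsLUB (MSet X) c := by
  have hdc : (dPot (fun x y => dist x y) μ) = fun _ => c := funext hinv
  have hEμ : en (fun x y => dist x y) μ μ = c := by
    rw [en_eq, hdc, sInt_const, hμ, mul_one]
  have hub : ∀ ν : SignedMeasure X, ν Set.univ = (1 : ℝ) →
      en (fun x y => dist x y) ν ν ≤ c := by
    intro ν hν
    have h0 : (ν - μ) Set.univ = (0 : ℝ) := by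
      rw [VectorMeasure.sub_apply, hν, hμ]; ring
    have hσ := hq (ν - μ) h0
    have hcν := contDPot ν
    have e3 : en (fun x y => dist x y) μ ν = c := by
      rw [en_symm, en_eq, hdc, sInt_const, hν, mul_one]
    have e1 : dPot (fun x y => dist x y) (ν - μ) =
        fun x => dPot (fun x y => dist x y) ν x - c := by
      funext x
      show sInt (ν - μ) (fun y => dist x y) = _
      rw [sInt_measure_sub ν μ (f := fun y => dist x y) (by fun_prop), ← hinv x]
      rfl
    have e2 : en (fun x y => dist x y) (ν - μ) (ν - μ) =
        en (fun x y => dist x y) ν ν - c - (en (fun x y => dist x y) μ ν - c) := by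
      rw [en_eq, e1, sInt_measure_sub ν μ (f := fun x => dPot (fun x y => dist x y) ν x - c) (hcν.sub continuous_const),
          sInt_sub' ν hcν continuous_const, sInt_sub' μ hcν continuous_const,
          sInt_const, sInt_const, hμ, hν, ← en_eq, ← en_eq]
      ring
    rw [e2, e3] at hσ
    linarith
  refine ⟨hEμ, ?_, ?_⟩
  · rintro r ⟨ν, hν, rfl⟩
    exact hub ν hν
  · intro b hb
    exact hb ⟨μ, hμ, hEμ⟩
end

section
/- If (X, d) is a compact strictly quasihypermetric space, then there exists at most one maximal measure in M₁(X): if μ, ν ∈ M₁(X) satisfy I(μ) = I(ν) = M(X) < ∞, then μ = ν. -/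
open MeasureTheory

section Aux

variable {X : Type*} [MetricSpace X] [CompactSpace X] [MeasurableSpace X] [BorelSpace X]

lemma myInteg (f : X → ℝ) (hf : Continuous f) (P : Measure X) [IsFiniteMeasure P] :
    Integrable f P := by
  have := hf.continuousOn.integrableOn_compact (isCompact_univ (X := X)) (μ := P)
  rwa [integrableOn_univ] at this

lemma sInt_repr (μ : SignedMeasure X) (P N : Measure X) [IsFiniteMeasure P] [IsFiniteMeasure N]
    (h : μ = P.toSignedMeasure - N.toSignedMeasure) (f : X → ℝ) (hf : Continuous f) :
    sInt μ f = (∫ x, f x ∂P) - ∫ x, f x ∂N := by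
  set p := μ.toJordanDecomposition.posPart with hp
  set n := μ.toJordanDecomposition.negPart with hn
  have hJ : p.toSignedMeasure - n.toSignedMeasure = P.toSignedMeasure - N.toSignedMeasure := by
    rw [← h]
    exact μ.toSignedMeasure_toJordanDecomposition
  have hsum : (p + N).toSignedMeasure = (n + P).toSignedMeasure := by
    rw [Measure.toSignedMeasure_add, Measure.toSignedMeasure_add]
    rw [sub_eq_sub_iff_add_eq_add] at hJ
    linear_combination (norm := abel) hJ
  have hmeas : p + N = n + P := (Measure.toSignedMeasure_eq_toSignedMeasure_iff).mp hsum
  have hint : (∫ x, f x ∂(p + N)) = ∫ x, f x ∂(n + P) := by rw [hmeas]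
  rw [integral_add_measure (myInteg f hf p) (myInteg f hf N),
      integral_add_measure (myInteg f hf n) (myInteg f hf P)] at hint
  simp only [sInt, ← hp, ← hn]
  linarith

lemma sInt_self (μ : SignedMeasure X) (f : X → ℝ) (hf : Continuous f) :
    sInt μ f = (∫ x, f x ∂μ.toJordanDecomposition.posPart)
      - ∫ x, f x ∂μ.toJordanDecomposition.negPart := rfl

/-- Basic representation of a signed measure. -/
lemma sm_eq (μ : SignedMeasure X) :
    μ = μ.toJordanDecomposition.posPart.toSignedMeasure
      - μ.toJordanDecomposition.negPart.toSignedMeasure :=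
  (μ.toSignedMeasure_toJordanDecomposition).symm

lemma sInt_add (μ ν : SignedMeasure X) (f : X → ℝ) (hf : Continuous f) :
    sInt (μ + ν) f = sInt μ f + sInt ν f := by
  have h : μ + ν = (μ.toJordanDecomposition.posPart + ν.toJordanDecomposition.posPart).toSignedMeasure
      - (μ.toJordanDecomposition.negPart + ν.toJordanDecomposition.negPart).toSignedMeasure := by
    rw [Measure.toSignedMeasure_add, Measure.toSignedMeasure_add]
    nth_rewrite 1 [sm_eq μ, sm_eq ν]
    abel
  rw [sInt_repr _ _ _ h f hf,
    integral_add_measure (myInteg f hf _) (myInteg f hf _),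
    integral_add_measure (myInteg f hf _) (myInteg f hf _),
    sInt_self μ f hf, sInt_self ν f hf]
  ring

lemma sInt_neg (μ : SignedMeasure X) (f : X → ℝ) (hf : Continuous f) :
    sInt (-μ) f = -sInt μ f := by
  have h : -μ = μ.toJordanDecomposition.negPart.toSignedMeasure
      - μ.toJordanDecomposition.posPart.toSignedMeasure := by
    nth_rewrite 1 [sm_eq μ]; abel
  rw [sInt_repr _ _ _ h f hf, sInt_self μ f hf]
  ring

lemma sInt_smul (c : ℝ) (hc : 0 ≤ c) (μ : SignedMeasure X) (f : X → ℝ) (hf : Continuous f) :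
    sInt (c • μ) f = c * sInt μ f := by
  have h : c • μ = (c.toNNReal • μ.toJordanDecomposition.posPart).toSignedMeasure
      - (c.toNNReal • μ.toJordanDecomposition.negPart).toSignedMeasure := by
    rw [Measure.toSignedMeasure_smul, Measure.toSignedMeasure_smul]
    nth_rewrite 1 [sm_eq μ]
    rw [smul_sub]
    congr 1 <;>
      rw [NNReal.smul_def, Real.coe_toNNReal _ hc]
  rw [sInt_repr _ _ _ h f hf, integral_smul_nnreal_measure, integral_smul_nnreal_measure,
    sInt_self μ f hf]
  simp only [NNReal.smul_def, Real.coe_toNNReal _ hc, smul_eq_mul]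
  ring

lemma sInt_addf (μ : SignedMeasure X) (f g : X → ℝ) (hf : Continuous f) (hg : Continuous g) :
    sInt μ (fun x => f x + g x) = sInt μ f + sInt μ g := by
  simp only [sInt]
  rw [integral_add (myInteg f hf _) (myInteg g hg _),
    integral_add (myInteg f hf _) (myInteg g hg _)]
  ring

lemma sInt_mulf (μ : SignedMeasure X) (c : ℝ) (f : X → ℝ) :
    sInt μ (fun x => c * f x) = c * sInt μ f := by
  simp only [sInt, integral_const_mul]
  ring

lemma sInt_negf (μ : SignedMeasure X) (f : X → ℝ) :
    sInt μ (fun x => -f x) = -sInt μ f := by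
  have := sInt_mulf μ (-1) f
  simpa using this

/-- Continuity of `x ↦ ∫ dist x y ∂P`. -/
lemma cont_int (P : Measure X) [IsFiniteMeasure P] :
    Continuous (fun x => ∫ y, dist x y ∂P) := by
  have hcont : ∀ z : X, Continuous (fun y : X => dist z y) := fun z => by fun_prop
  have key : ∀ x x' : X, (∫ y, dist x y ∂P) - ∫ y, dist x' y ∂P
      ≤ (P Set.univ).toReal * dist x x' := by
    intro x x'
    rw [← integral_sub (myInteg _ (hcont x) P) (myInteg _ (hcont x') P)]
    calc (∫ y, dist x y - dist x' y ∂P) ≤ ∫ _, dist x x' ∂P := by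
          apply integral_mono
          · exact ((myInteg _ (hcont x) P).sub (myInteg _ (hcont x') P))
          · exact integrable_const _
          · intro y
            have := abs_dist_sub_le x x' y
            have h2 := abs_le.mp this
            show dist x y - dist x' y ≤ dist x x'
            linarith [h2.2]
      _ = (P Set.univ).toReal * dist x x' := by
          rw [integral_const, smul_eq_mul, measureReal_def]
  have lip : LipschitzWith (P Set.univ).toReal.toNNReal (fun x => ∫ y, dist x y ∂P) := by
    apply LipschitzWith.of_dist_le_mul
    intro x x'
    rw [Real.dist_eq, abs_sub_le_iff]
    constructor
    · calc (∫ y, dist x y ∂P) - ∫ y, dist x' y ∂P ≤ (P Set.univ).toReal * dist x x' :=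
          key x x'
        _ ≤ ((P Set.univ).toReal.toNNReal : ℝ) * dist x x' := by
          gcongr
          exact Real.le_coe_toNNReal _
    · calc (∫ y, dist x' y ∂P) - ∫ y, dist x y ∂P ≤ (P Set.univ).toReal * dist x' x :=
          key x' x
        _ ≤ ((P Set.univ).toReal.toNNReal : ℝ) * dist x x' := by
          rw [dist_comm x' x]
          gcongr
          exact Real.le_coe_toNNReal _
  exact lip.continuous

lemma cont_pot (ν : SignedMeasure X) :
    Continuous (fun x => sInt ν (fun y => dist x y)) := by
  simp only [sInt]
  exact (cont_int _).sub (cont_int _)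

end Aux

/-- In a compact strictly quasihypermetric space there is at most one maximal measure. -/
theorem stmt2 {X : Type*} [MetricSpace X] [CompactSpace X] [MeasurableSpace X] [BorelSpace X]
    (hq : ∀ φ : SignedMeasure X, φ Set.univ = (0 : ℝ) →
      en (fun x y => dist x y) φ φ ≤ 0 ∧ (en (fun x y => dist x y) φ φ = 0 → φ = 0))
    (μ ν : SignedMeasure X) (hμ : μ Set.univ = (1 : ℝ)) (hν : ν Set.univ = (1 : ℝ))
    (m : ℝ) (hm : IsLUB (MSet X) m)
    (h1 : en (fun x y => dist x y) μ μ = m) (h2 : en (fun x y => dist x y) ν ν = m) :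
    μ = ν := by
  set D : X → X → ℝ := fun x y => dist x y with hD
  have contd : ∀ x : X, Continuous (fun y => D x y) :=
    fun x => continuous_const.dist continuous_id
  -- bilinearity of en
  have en_add_left : ∀ α β ρ : SignedMeasure X, en D (α + β) ρ = en D α ρ + en D β ρ := by
    intro α β ρ
    exact sInt_add α β _ (cont_pot ρ)
  have en_neg_left : ∀ α ρ : SignedMeasure X, en D (-α) ρ = -en D α ρ := by
    intro α ρ
    exact sInt_neg α _ (cont_pot ρ)
  have en_smul_left : ∀ (c : ℝ), 0 ≤ c → ∀ α ρ : SignedMeasure X,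
      en D (c • α) ρ = c * en D α ρ := by
    intro c hc α ρ
    exact sInt_smul c hc α _ (cont_pot ρ)
  have en_add_right : ∀ ρ α β : SignedMeasure X, en D ρ (α + β) = en D ρ α + en D ρ β := by
    intro ρ α β
    have : (fun x => sInt (α + β) (fun y => D x y))
        = fun x => sInt α (fun y => D x y) + sInt β (fun y => D x y) := by
      funext x
      exact sInt_add α β _ (contd x)
    unfold en
    rw [this]
    exact sInt_addf ρ _ _ (cont_pot α) (cont_pot β)
  have en_neg_right : ∀ ρ α : SignedMeasure X, en D ρ (-α) = -en D ρ α := by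
    intro ρ α
    have : (fun x => sInt (-α) (fun y => D x y))
        = fun x => -(sInt α (fun y => D x y)) := by
      funext x
      exact sInt_neg α _ (contd x)
    unfold en
    rw [this]
    exact sInt_negf ρ _
  have en_smul_right : ∀ (c : ℝ), 0 ≤ c → ∀ ρ α : SignedMeasure X,
      en D ρ (c • α) = c * en D ρ α := by
    intro c hc ρ α
    have : (fun x => sInt (c • α) (fun y => D x y))
        = fun x => c * (sInt α (fun y => D x y)) := by
      funext x
      exact sInt_smul c hc α _ (contd x)
    unfold en
    rw [this]
    exact sInt_mulf ρ c _
  -- the difference φ = μ - ν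
  set φ : SignedMeasure X := μ + (-ν) with hφ
  have hφ0 : φ Set.univ = (0 : ℝ) := by
    simp [hφ, MeasureTheory.VectorMeasure.add_apply, MeasureTheory.VectorMeasure.neg_apply,
      hμ, hν]
  have expandφ : en D φ φ = 2 * m - (en D μ ν + en D ν μ) := by
    rw [hφ]
    simp only [en_add_left, en_add_right, en_neg_left, en_neg_right, h1, h2]
    ring
  have hle : en D φ φ ≤ 0 := (hq φ hφ0).1
  -- the average σ = 2⁻¹ • (μ + ν)
  set σ : SignedMeasure X := (2⁻¹ : ℝ) • (μ + ν) with hσ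
  have hσ1 : σ Set.univ = (1 : ℝ) := by
    simp only [hσ, MeasureTheory.VectorMeasure.smul_apply,
      MeasureTheory.VectorMeasure.add_apply, hμ, hν, smul_eq_mul]
    norm_num
  have expandσ : en D σ σ = 4⁻¹ * (2 * m + (en D μ ν + en D ν μ)) := by
    rw [hσ, en_smul_left _ (by norm_num), en_smul_right _ (by norm_num)]
    simp only [en_add_left, en_add_right, h1, h2]
    ring
  have hσm : en D σ σ ≤ m := hm.1 ⟨σ, hσ1, rfl⟩
  -- conclude
  have hsum : en D μ ν + en D ν μ = 2 * m := by
    have h3 : en D μ ν + en D ν μ ≥ 2 * m := by linarith [expandφ, hle]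
    have h4 : en D μ ν + en D ν μ ≤ 2 * m := by linarith [expandσ, hσm]
    linarith
  have hzero : en D φ φ = 0 := by rw [expandφ, hsum]; ring
  have : φ = 0 := (hq φ hφ0).2 hzero
  have : μ - ν = 0 := by rwa [hφ, ← sub_eq_add_neg] at this
  exact sub_eq_zero.mp this
end

section
/- Let (X, d₁), (Y, d₂) be disjoint compact strictly quasihypermetric spaces with M(X), M(Y) < ∞, and Z = X ∪ Y metrized with cross-distance constant c, 2c ≥ max(D(X), D(Y)). Then Z is strictly quasihypermetric if and only if 2c ≥ M(X) + M(Y) and additionally (2c > M(X) + M(Y), or X has no maximal measure, or Y has no maximal measure). -/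
open MeasureTheory

/-- The combined distance function on the disjoint union `X ⊕ Y`: it agrees with `d₁`
on `X`, with `d₂` on `Y`, and equals the constant `c` between `X` and `Y`. -/
def dJoin {X Y : Type*} (d₁ : X → X → ℝ) (d₂ : Y → Y → ℝ) (c : ℝ) :
    X ⊕ Y → X ⊕ Y → ℝ
  | .inl x, .inl x' => d₁ x x'
  | .inr y, .inr y' => d₂ y y'
  | _, _ => c

set_option linter.unusedSectionVars false

section Aux

open Set

variable {Z : Type*} [MeasurableSpace Z]

def Good (f : Z → ℝ) : Prop := Measurable f ∧ ∃ C : ℝ, ∀ x, |f x| ≤ C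

lemma Good.integrable {f : Z → ℝ} (hf : Good f) (m : Measure Z) [IsFiniteMeasure m] :
    Integrable f m := by
  obtain ⟨hm, C, hC⟩ := hf
  exact (integrable_const C).mono' hm.aestronglyMeasurable
    (Filter.Eventually.of_forall fun x => by simpa [Real.norm_eq_abs] using hC x)

lemma good_const (k : ℝ) : Good (fun _ : Z => k) := ⟨measurable_const, |k|, fun _ => le_refl _⟩

lemma Good.add {f g : Z → ℝ} (hf : Good f) (hg : Good g) : Good (fun x => f x + g x) := by
  obtain ⟨hmf, C, hC⟩ := hf; obtain ⟨hmg, D, hD⟩ := hg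
  exact ⟨hmf.add hmg, C + D, fun x => (abs_add_le _ _).trans (add_le_add (hC x) (hD x))⟩

lemma Good.const_mul {f : Z → ℝ} (hf : Good f) (r : ℝ) : Good (fun x => r * f x) := by
  obtain ⟨hm, C, hC⟩ := hf
  exact ⟨hm.const_mul r, |r| * C, fun x => by
    rw [abs_mul]; exact mul_le_mul_of_nonneg_left (hC x) (abs_nonneg r)⟩

lemma good_of_cont {W : Type*} [TopologicalSpace W] [CompactSpace W] [MeasurableSpace W]
    [OpensMeasurableSpace W] {f : W → ℝ} (hf : Continuous f) : Good f := by
  obtain ⟨C, hC⟩ := isCompact_univ.exists_bound_of_continuousOn hf.continuousOn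
  exact ⟨hf.measurable, C, fun x => by simpa [Real.norm_eq_abs] using hC x (mem_univ x)⟩

lemma sm_apply (μ : SignedMeasure Z) {s : Set Z} (hs : MeasurableSet s) :
    μ s = (μ.toJordanDecomposition.posPart s).toReal
      - (μ.toJordanDecomposition.negPart s).toReal := by
  conv_lhs => rw [← μ.toSignedMeasure_toJordanDecomposition]
  rw [JordanDecomposition.toSignedMeasure, Measure.toSignedMeasure_sub_apply hs]
  rfl

lemma sInt_eq_of (μ : SignedMeasure Z) (p q : Measure Z) [IsFiniteMeasure p] [IsFiniteMeasure q]
    (h : ∀ s : Set Z, MeasurableSet s → μ s = (p s).toReal - (q s).toReal)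
    {f : Z → ℝ} (hf : Good f) :
    sInt μ f = (∫ x, f x ∂p) - ∫ x, f x ∂q := by
  set jp := μ.toJordanDecomposition.posPart with hjp
  set jn := μ.toJordanDecomposition.negPart with hjn
  have key : jp + q = jn + p := by
    ext s hs
    have h1 : μ s = (jp s).toReal - (jn s).toReal := sm_apply μ hs
    have h2 := h s hs
    have e : (jp s).toReal + (q s).toReal = (jn s).toReal + (p s).toReal := by
      rw [h2] at h1; linarith
    have e2 : ((jp + q) s).toReal = ((jn + p) s).toReal := by
      simp only [Measure.add_apply,
        ENNReal.toReal_add (measure_ne_top _ _) (measure_ne_top _ _), e]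
    exact (ENNReal.toReal_eq_toReal_iff' (measure_ne_top _ _) (measure_ne_top _ _)).1 e2
  have e3 : (∫ x, f x ∂jp) + ∫ x, f x ∂q = (∫ x, f x ∂jn) + ∫ x, f x ∂p := by
    rw [← integral_add_measure (hf.integrable jp) (hf.integrable q), key,
      integral_add_measure (hf.integrable jn) (hf.integrable p)]
  unfold sInt
  linarith

lemma sInt_const_s7 (ν : SignedMeasure Z) (k : ℝ) : sInt ν (fun _ => k) = k * ν univ := by
  unfold sInt
  rw [integral_const, integral_const, sm_apply ν MeasurableSet.univ]
  simp [smul_eq_mul, Measure.real]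
  ring

lemma sInt_add_s7 (ν : SignedMeasure Z) {f g : Z → ℝ} (hf : Good f) (hg : Good g) :
    sInt ν (fun x => f x + g x) = sInt ν f + sInt ν g := by
  unfold sInt
  rw [integral_add (hf.integrable _) (hg.integrable _),
    integral_add (hf.integrable _) (hg.integrable _)]
  ring

lemma sInt_const_mul (ν : SignedMeasure Z) (f : Z → ℝ) (r : ℝ) :
    sInt ν (fun x => r * f x) = r * sInt ν f := by
  unfold sInt
  rw [integral_const_mul, integral_const_mul]
  ring

lemma sInt_congr (ν : SignedMeasure Z) {f g : Z → ℝ} (h : ∀ x, f x = g x) :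
    sInt ν f = sInt ν g := by
  have : f = g := funext h
  rw [this]

lemma smul_apply' (r : ℝ) (ν : SignedMeasure Z) (s : Set Z) : (r • ν) s = r * ν s := rfl

lemma sInt_smul_s7 (r : ℝ) (ν : SignedMeasure Z) {f : Z → ℝ} (hf : Good f) :
    sInt (r • ν) f = r * sInt ν f := by
  set p := ν.toJordanDecomposition.posPart with hp
  set q := ν.toJordanDecomposition.negPart with hq
  rcases le_or_gt 0 r with hr | hr
  · haveI : IsFiniteMeasure (ENNReal.ofReal r • p) :=
      ⟨by simpa [Measure.smul_apply, smul_eq_mul] using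
        ENNReal.mul_lt_top ENNReal.ofReal_lt_top (measure_lt_top p _)⟩
    haveI : IsFiniteMeasure (ENNReal.ofReal r • q) :=
      ⟨by simpa [Measure.smul_apply, smul_eq_mul] using
        ENNReal.mul_lt_top ENNReal.ofReal_lt_top (measure_lt_top q _)⟩
    have h : ∀ s : Set Z, MeasurableSet s →
        (r • ν) s = ((ENNReal.ofReal r • p) s).toReal - ((ENNReal.ofReal r • q) s).toReal := by
      intro s hs
      rw [smul_apply', sm_apply ν hs]
      simp [ENNReal.toReal_mul, ENNReal.toReal_ofReal hr]
      ring
    rw [sInt_eq_of (r • ν) _ _ h hf]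
    rw [integral_smul_measure, integral_smul_measure, ENNReal.toReal_ofReal hr]
    unfold sInt
    simp [smul_eq_mul]
    ring
  · have hr' : (0:ℝ) ≤ -r := by linarith
    haveI : IsFiniteMeasure (ENNReal.ofReal (-r) • p) :=
      ⟨by simpa [Measure.smul_apply, smul_eq_mul] using
        ENNReal.mul_lt_top ENNReal.ofReal_lt_top (measure_lt_top p _)⟩
    haveI : IsFiniteMeasure (ENNReal.ofReal (-r) • q) :=
      ⟨by simpa [Measure.smul_apply, smul_eq_mul] using
        ENNReal.mul_lt_top ENNReal.ofReal_lt_top (measure_lt_top q _)⟩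
    have h : ∀ s : Set Z, MeasurableSet s →
        (r • ν) s = ((ENNReal.ofReal (-r) • q) s).toReal
          - ((ENNReal.ofReal (-r) • p) s).toReal := by
      intro s hs
      rw [smul_apply', sm_apply ν hs]
      simp [ENNReal.toReal_mul, ENNReal.toReal_ofReal hr']
      ring
    rw [sInt_eq_of (r • ν) _ _ h hf]
    rw [integral_smul_measure, integral_smul_measure, ENNReal.toReal_ofReal hr']
    unfold sInt
    simp [smul_eq_mul]
    ring

end Aux

section Sum

open Set

variable {X Y : Type*} [MeasurableSpace X] [MeasurableSpace Y]

lemma me_inl : MeasurableEmbedding (Sum.inl : X → X ⊕ Y) :=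
  ⟨Sum.inl_injective, measurable_inl, fun _ hs => hs.inl_image⟩

lemma me_inr : MeasurableEmbedding (Sum.inr : Y → X ⊕ Y) :=
  ⟨Sum.inr_injective, measurable_inr, fun _ hs => measurableSet_inr_image.2 hs⟩

lemma Good.compInl {f : X ⊕ Y → ℝ} (hf : Good f) : Good (fun x => f (Sum.inl x)) := by
  obtain ⟨hm, C, hC⟩ := hf
  exact ⟨hm.comp measurable_inl, C, fun x => hC _⟩

lemma Good.compInr {f : X ⊕ Y → ℝ} (hf : Good f) : Good (fun y => f (Sum.inr y)) := by
  obtain ⟨hm, C, hC⟩ := hf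
  exact ⟨hm.comp measurable_inr, C, fun y => hC _⟩

lemma Good.sumElim {f : X → ℝ} {g : Y → ℝ} (hf : Good f) (hg : Good g) :
    Good (Sum.elim f g) := by
  obtain ⟨hmf, C, hC⟩ := hf; obtain ⟨hmg, D, hD⟩ := hg
  refine ⟨hmf.sumElim hmg, max C D, fun z => ?_⟩
  cases z with
  | inl x => exact (hC x).trans (le_max_left _ _)
  | inr y => exact (hD y).trans (le_max_right _ _)

lemma join_apply (ν₁ : SignedMeasure X) (ν₂ : SignedMeasure Y) {s : Set (X ⊕ Y)}
    (hs : MeasurableSet s) :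
    (ν₁.map Sum.inl + ν₂.map Sum.inr : SignedMeasure (X ⊕ Y)) s
      = ν₁ (Sum.inl ⁻¹' s) + ν₂ (Sum.inr ⁻¹' s) := by
  rw [VectorMeasure.add_apply, VectorMeasure.map_apply _ measurable_inl hs,
    VectorMeasure.map_apply _ measurable_inr hs]

lemma integral_join (p₁ : Measure X) (p₂ : Measure Y) [IsFiniteMeasure p₁] [IsFiniteMeasure p₂]
    {f : X ⊕ Y → ℝ} (hf : Good f) :
    ∫ z, f z ∂(p₁.map Sum.inl + p₂.map Sum.inr)
      = (∫ x, f (Sum.inl x) ∂p₁) + ∫ y, f (Sum.inr y) ∂p₂ := by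
  have h1 : Integrable f (p₁.map Sum.inl) := me_inl.integrable_map_iff.2 (hf.compInl.integrable p₁)
  have h2 : Integrable f (p₂.map Sum.inr) := me_inr.integrable_map_iff.2 (hf.compInr.integrable p₂)
  rw [integral_add_measure h1 h2, me_inl.integral_map, me_inr.integral_map]

lemma join_decomp_apply (ν₁ : SignedMeasure X) (ν₂ : SignedMeasure Y) {s : Set (X ⊕ Y)}
    (hs : MeasurableSet s) :
    (ν₁.map Sum.inl + ν₂.map Sum.inr : SignedMeasure (X ⊕ Y)) s
      = (((ν₁.toJordanDecomposition.posPart).map Sum.inl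
          + (ν₂.toJordanDecomposition.posPart).map Sum.inr : Measure (X ⊕ Y)) s).toReal
        - (((ν₁.toJordanDecomposition.negPart).map Sum.inl
          + (ν₂.toJordanDecomposition.negPart).map Sum.inr : Measure (X ⊕ Y)) s).toReal := by
  rw [join_apply _ _ hs, sm_apply ν₁ (measurable_inl hs), sm_apply ν₂ (measurable_inr hs)]
  rw [Measure.add_apply, Measure.add_apply,
    Measure.map_apply measurable_inl hs, Measure.map_apply measurable_inr hs,
    Measure.map_apply measurable_inl hs, Measure.map_apply measurable_inr hs,
    ENNReal.toReal_add (measure_ne_top _ _) (measure_ne_top _ _),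
    ENNReal.toReal_add (measure_ne_top _ _) (measure_ne_top _ _)]
  ring

lemma sInt_join (ν₁ : SignedMeasure X) (ν₂ : SignedMeasure Y) {f : X ⊕ Y → ℝ} (hf : Good f) :
    sInt (ν₁.map Sum.inl + ν₂.map Sum.inr) f
      = sInt ν₁ (fun x => f (Sum.inl x)) + sInt ν₂ (fun y => f (Sum.inr y)) := by
  rw [sInt_eq_of (ν₁.map Sum.inl + ν₂.map Sum.inr) _ _
    (fun s hs => join_decomp_apply ν₁ ν₂ hs) hf,
    integral_join _ _ hf, integral_join _ _ hf]
  unfold sInt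
  ring

lemma mass_join (ν₁ : SignedMeasure X) (ν₂ : SignedMeasure Y) :
    (ν₁.map Sum.inl + ν₂.map Sum.inr : SignedMeasure (X ⊕ Y)) univ = ν₁ univ + ν₂ univ := by
  rw [join_apply _ _ MeasurableSet.univ]
  simp

lemma join_eq_zero {ν₁ : SignedMeasure X} {ν₂ : SignedMeasure Y}
    (h : ν₁.map Sum.inl + ν₂.map Sum.inr = 0) : ν₁ = 0 ∧ ν₂ = 0 := by
  constructor
  · ext s hs
    have := congrArg (fun v : SignedMeasure (X ⊕ Y) => v (Sum.inl '' s)) h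
    simp only [join_apply ν₁ ν₂ hs.inl_image, VectorMeasure.zero_apply] at this
    rw [Sum.inl_injective.preimage_image] at this
    have he : (Sum.inr ⁻¹' (Sum.inl '' s) : Set Y) = ∅ := by
      ext y; simp
    rw [he] at this
    simpa using this
  · ext s hs
    have := congrArg (fun v : SignedMeasure (X ⊕ Y) => v (Sum.inr '' s)) h
    simp only [join_apply ν₁ ν₂ (measurableSet_inr_image.2 hs), VectorMeasure.zero_apply] at this
    rw [Sum.inr_injective.preimage_image] at this
    have he : (Sum.inl ⁻¹' (Sum.inr '' s) : Set X) = ∅ := by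
      ext x; simp
    rw [he] at this
    simpa using this

lemma exists_decomp (μ : SignedMeasure (X ⊕ Y)) :
    ∃ (ν₁ : SignedMeasure X) (ν₂ : SignedMeasure Y),
      μ = ν₁.map Sum.inl + ν₂.map Sum.inr := by
  set p := μ.toJordanDecomposition.posPart with hp
  set q := μ.toJordanDecomposition.negPart with hq
  haveI h1 : IsFiniteMeasure (p.comap Sum.inl) := ⟨by
    rw [Measure.comap_apply _ Sum.inl_injective (fun _ hs => hs.inl_image) _ MeasurableSet.univ]
    exact (measure_lt_top p _)⟩
  haveI h2 : IsFiniteMeasure (q.comap Sum.inl) := ⟨by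
    rw [Measure.comap_apply _ Sum.inl_injective (fun _ hs => hs.inl_image) _ MeasurableSet.univ]
    exact (measure_lt_top q _)⟩
  haveI h3 : IsFiniteMeasure (p.comap Sum.inr) := ⟨by
    rw [Measure.comap_apply _ Sum.inr_injective
      (fun _ hs => measurableSet_inr_image.2 hs) _ MeasurableSet.univ]
    exact (measure_lt_top p _)⟩
  haveI h4 : IsFiniteMeasure (q.comap Sum.inr) := ⟨by
    rw [Measure.comap_apply _ Sum.inr_injective
      (fun _ hs => measurableSet_inr_image.2 hs) _ MeasurableSet.univ]
    exact (measure_lt_top q _)⟩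
  refine ⟨(p.comap Sum.inl).toSignedMeasure - (q.comap Sum.inl).toSignedMeasure,
    (p.comap Sum.inr).toSignedMeasure - (q.comap Sum.inr).toSignedMeasure, ?_⟩
  ext s hs
  rw [join_apply _ _ hs, sm_apply μ hs]
  rw [VectorMeasure.sub_apply, VectorMeasure.sub_apply,
    Measure.toSignedMeasure_apply_measurable (measurable_inl hs),
    Measure.toSignedMeasure_apply_measurable (measurable_inl hs),
    Measure.toSignedMeasure_apply_measurable (measurable_inr hs),
    Measure.toSignedMeasure_apply_measurable (measurable_inr hs)]
  simp only [Measure.real]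
  rw [Measure.comap_apply _ Sum.inl_injective (fun _ h => h.inl_image) _ (measurable_inl hs),
    Measure.comap_apply _ Sum.inl_injective (fun _ h => h.inl_image) _ (measurable_inl hs),
    Measure.comap_apply _ Sum.inr_injective (fun _ h => measurableSet_inr_image.2 h) _
      (measurable_inr hs),
    Measure.comap_apply _ Sum.inr_injective (fun _ h => measurableSet_inr_image.2 h) _
      (measurable_inr hs)]
  have himg : ∀ m : Measure (X ⊕ Y), IsFiniteMeasure m →
      (m s).toReal = (m (Sum.inl '' (Sum.inl ⁻¹' s))).toReal
        + (m (Sum.inr '' (Sum.inr ⁻¹' s))).toReal := by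
    intro m hm
    have e1 : Sum.inl '' (Sum.inl ⁻¹' s) = s ∩ range Sum.inl := Set.image_preimage_eq_inter_range
    have e2 : Sum.inr '' (Sum.inr ⁻¹' s) = s ∩ range Sum.inr := Set.image_preimage_eq_inter_range
    have e3 : s ∩ range Sum.inr = s \ range Sum.inl := by
      rw [Set.diff_eq, ← Set.compl_range_inl]
    have := measure_inter_add_diff (μ := m) s (measurableSet_range_inl (α := X) (β := Y))
    rw [e1, e2, e3, ← this,
      ENNReal.toReal_add (measure_ne_top _ _) (measure_ne_top _ _)]
  rw [himg p inferInstance, himg q inferInstance]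
  ring

end Sum

section Metric

open Set

variable {X : Type*} [MetricSpace X] [CompactSpace X] [MeasurableSpace X] [BorelSpace X]

lemma good_dist (x : X) : Good (fun y => dist x y) :=
  good_of_cont (continuous_const.dist continuous_id)

lemma pot_cont (m : Measure X) [IsFiniteMeasure m] :
    Continuous (fun x => ∫ y, dist x y ∂m) := by
  have hd : ∀ x : X, Integrable (fun y => dist x y) m := fun x => (good_dist x).integrable m
  refine LipschitzWith.continuous (K := (m univ).toReal.toNNReal) ?_
  refine LipschitzWith.of_dist_le_mul fun x x' => ?_
  rw [Real.dist_eq, ← integral_sub (hd x) (hd x')]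
  calc |∫ y, (dist x y - dist x' y) ∂m| ≤ ∫ y, |dist x y - dist x' y| ∂m := by
        simpa [Real.norm_eq_abs] using norm_integral_le_integral_norm (fun y => dist x y - dist x' y)
    _ ≤ ∫ _, dist x x' ∂m :=
        integral_mono ((hd x).sub (hd x')).abs (integrable_const _)
          (fun y => abs_dist_sub_le x x' y)
    _ = (m univ).toReal * dist x x' := by rw [integral_const]; simp [smul_eq_mul, Measure.real]
    _ ≤ ((m univ).toReal.toNNReal : ℝ) * dist x x' := by
        refine mul_le_mul_of_nonneg_right ?_ dist_nonneg
        exact le_of_eq (Real.coe_toNNReal _ ENNReal.toReal_nonneg).symm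

lemma pot_good (ν : SignedMeasure X) : Good (fun x => sInt ν (fun y => dist x y)) := by
  have : (fun x => sInt ν (fun y => dist x y))
      = fun x => (∫ y, dist x y ∂ν.toJordanDecomposition.posPart)
        - ∫ y, dist x y ∂ν.toJordanDecomposition.negPart := rfl
  rw [this]
  exact good_of_cont ((pot_cont _).sub (pot_cont _))

lemma en_smul (r : ℝ) (ν : SignedMeasure X) :
    en (fun x y => dist x y) (r • ν) (r • ν) = r ^ 2 * en (fun x y => dist x y) ν ν := by
  unfold en
  have h1 : ∀ x : X, sInt (r • ν) (fun y => dist x y) = r * sInt ν (fun y => dist x y) :=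
    fun x => sInt_smul_s7 r ν (good_dist x)
  rw [sInt_congr (r • ν) h1, sInt_smul_s7 r ν ((pot_good ν).const_mul r),
    sInt_const_mul]
  ring

omit [MetricSpace X] [CompactSpace X] [BorelSpace X] in
lemma mass_smul (r : ℝ) (ν : SignedMeasure X) : (r • ν) univ = r * ν univ := rfl

end Metric

section Join

open Set

variable {X Y : Type*} [MetricSpace X] [CompactSpace X] [MeasurableSpace X] [BorelSpace X]
  [MetricSpace Y] [CompactSpace Y] [MeasurableSpace Y] [BorelSpace Y]

lemma dJoin_inl (c : ℝ) (x : X) :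
    (fun w => dJoin (fun a b : X => dist a b) (fun a b : Y => dist a b) c (Sum.inl x) w)
      = Sum.elim (fun y : X => dist x y) (fun _ : Y => c) := by
  funext w; cases w <;> rfl

lemma dJoin_inr (c : ℝ) (y : Y) :
    (fun w => dJoin (fun a b : X => dist a b) (fun a b : Y => dist a b) c (Sum.inr y) w)
      = Sum.elim (fun _ : X => c) (fun y' : Y => dist y y') := by
  funext w; cases w <;> rfl

lemma en_join (ν₁ : SignedMeasure X) (ν₂ : SignedMeasure Y) (c : ℝ) :
    en (dJoin (fun x y => dist x y) (fun x y => dist x y) c)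
        (ν₁.map Sum.inl + ν₂.map Sum.inr) (ν₁.map Sum.inl + ν₂.map Sum.inr)
      = en (fun x y => dist x y) ν₁ ν₁ + en (fun x y => dist x y) ν₂ ν₂
        + 2 * c * (ν₁ univ * ν₂ univ) := by
  set μ : SignedMeasure (X ⊕ Y) := ν₁.map Sum.inl + ν₂.map Sum.inr with hμ
  have hinner : ∀ z : X ⊕ Y,
      sInt μ (fun w => dJoin (fun x y => dist x y) (fun x y => dist x y) c z w)
        = Sum.elim (fun x => sInt ν₁ (fun y => dist x y) + c * ν₂ univ)
            (fun y => sInt ν₂ (fun y' => dist y y') + c * ν₁ univ) z := by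
    intro z
    cases z with
    | inl x =>
      rw [hμ, dJoin_inl c x, sInt_join ν₁ ν₂ ((good_dist x).sumElim (good_const c))]
      simp only [Sum.elim_inl, Sum.elim_inr]
      rw [sInt_const_s7]
    | inr y =>
      rw [hμ, dJoin_inr c y, sInt_join ν₁ ν₂ ((good_const c).sumElim (good_dist y))]
      simp only [Sum.elim_inl, Sum.elim_inr]
      rw [sInt_const_s7]
      ring
  unfold en
  rw [sInt_congr μ hinner,
    sInt_join ν₁ ν₂ (Good.sumElim ((pot_good ν₁).add (good_const _))
      ((pot_good ν₂).add (good_const _)))]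
  simp only [Sum.elim_inl, Sum.elim_inr]
  rw [sInt_add_s7 ν₁ (pot_good ν₁) (good_const _), sInt_add_s7 ν₂ (pot_good ν₂) (good_const _),
    sInt_const_s7, sInt_const_s7]
  ring

end Join

/-- The join `Z = X ∪ Y` of two disjoint compact strictly quasihypermetric spaces with
finite `M`-constants and cross-distance `c` (with `2c ≥ max(D(X), D(Y))`) is strictly
quasihypermetric if and only if `2c ≥ M(X) + M(Y)` and in addition `2c > M(X) + M(Y)`,
or `X` has no maximal measure, or `Y` has no maximal measure. -/
theorem stmt7 {X Y : Type*} [MetricSpace X] [CompactSpace X] [MeasurableSpace X] [BorelSpace X]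
    [MetricSpace Y] [CompactSpace Y] [MeasurableSpace Y] [BorelSpace Y]
    (hqX : ∀ μ : SignedMeasure X, μ Set.univ = (0 : ℝ) →
      en (fun x y => dist x y) μ μ ≤ 0 ∧ (en (fun x y => dist x y) μ μ = 0 → μ = 0))
    (hqY : ∀ μ : SignedMeasure Y, μ Set.univ = (0 : ℝ) →
      en (fun x y => dist x y) μ μ ≤ 0 ∧ (en (fun x y => dist x y) μ μ = 0 → μ = 0))
    (mX mY : ℝ) (hmX : IsLUB (MSet X) mX) (hmY : IsLUB (MSet Y) mY)
    (c : ℝ)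
    (hc : max (Metric.diam (Set.univ : Set X)) (Metric.diam (Set.univ : Set Y)) ≤ 2 * c) :
    (∀ μ : SignedMeasure (X ⊕ Y), μ Set.univ = (0 : ℝ) →
        en (dJoin (fun x y => dist x y) (fun x y => dist x y) c) μ μ ≤ 0 ∧
          (en (dJoin (fun x y => dist x y) (fun x y => dist x y) c) μ μ = 0 → μ = 0)) ↔
      (mX + mY ≤ 2 * c ∧
        (mX + mY < 2 * c ∨
          ¬ (∃ μ : SignedMeasure X, μ Set.univ = (1 : ℝ) ∧ en (fun x y => dist x y) μ μ = mX) ∨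
          ¬ (∃ μ : SignedMeasure Y, μ Set.univ = (1 : ℝ) ∧ en (fun x y => dist x y) μ μ = mY))) := by
  classical
  constructor
  · intro hq
    have hub : mX + mY ≤ 2 * c := by
      by_contra hlt
      push_neg at hlt
      obtain ⟨r₁, hr₁mem, hr₁⟩ := (lt_isLUB_iff hmX).1
        (show mX - (mX + mY - 2 * c) / 2 < mX by linarith)
      obtain ⟨r₂, hr₂mem, hr₂⟩ := (lt_isLUB_iff hmY).1
        (show mY - (mX + mY - 2 * c) / 2 < mY by linarith)
      obtain ⟨μ₁, hμ₁m, hμ₁e⟩ := hr₁mem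
      obtain ⟨μ₂, hμ₂m, hμ₂e⟩ := hr₂mem
      set ν₂ : SignedMeasure Y := (-1 : ℝ) • μ₂ with hν₂
      set μ : SignedMeasure (X ⊕ Y) := μ₁.map Sum.inl + ν₂.map Sum.inr with hμ
      have hmass : μ Set.univ = (0 : ℝ) := by
        rw [hμ, mass_join, hμ₁m, hν₂, mass_smul, hμ₂m]; ring
      have hen : en (dJoin (fun x y => dist x y) (fun x y => dist x y) c) μ μ
          = r₁ + r₂ - 2 * c := by
        rw [hμ, en_join, hμ₁e, hν₂, en_smul, hμ₂e, mass_smul, hμ₁m, hμ₂m]; ring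
      have := (hq μ hmass).1
      rw [hen] at this
      linarith
    refine ⟨hub, ?_⟩
    by_contra hcon
    push_neg at hcon
    obtain ⟨hnlt, ⟨μ₁, hμ₁m, hμ₁e⟩, ⟨μ₂, hμ₂m, hμ₂e⟩⟩ := hcon
    have heq : mX + mY = 2 * c := le_antisymm hub hnlt
    set ν₂ : SignedMeasure Y := (-1 : ℝ) • μ₂ with hν₂
    set μ : SignedMeasure (X ⊕ Y) := μ₁.map Sum.inl + ν₂.map Sum.inr with hμ
    have hmass : μ Set.univ = (0 : ℝ) := by
      rw [hμ, mass_join, hμ₁m, hν₂, mass_smul, hμ₂m]; ring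
    have hen : en (dJoin (fun x y => dist x y) (fun x y => dist x y) c) μ μ = 0 := by
      rw [hμ, en_join, hμ₁e, hν₂, en_smul, hμ₂e, mass_smul, hμ₁m, hμ₂m]; linarith
    have hz := (hq μ hmass).2 hen
    have h0 := (join_eq_zero hz).1
    rw [h0] at hμ₁m
    simp at hμ₁m
  · rintro ⟨hub, hside⟩ μ hmass
    obtain ⟨ν₁, ν₂, rfl⟩ := exists_decomp μ
    rw [mass_join] at hmass
    have hen := en_join ν₁ ν₂ c
    by_cases haz : ν₁ Set.univ = 0
    · have hbz : ν₂ Set.univ = 0 := by linarith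
      have h1 := hqX ν₁ haz
      have h2 := hqY ν₂ hbz
      constructor
      · rw [hen, haz]
        have := h1.1; have := h2.1
        nlinarith
      · intro h0
        rw [hen, haz, hbz] at h0
        simp only [mul_zero, zero_mul, add_zero] at h0
        have e1 : en (fun x y => dist x y) ν₁ ν₁ = 0 := by linarith [h1.1, h2.1]
        have e2 : en (fun x y => dist x y) ν₂ ν₂ = 0 := by linarith [h1.1, h2.1]
        rw [h1.2 e1, h2.2 e2, VectorMeasure.map_zero, VectorMeasure.map_zero, add_zero]
    · have hbz : ν₂ Set.univ = -(ν₁ Set.univ) := by linarith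
      have ha2 : 0 < (ν₁ Set.univ) ^ 2 := by positivity
      have hI1 : en (fun x y => dist x y) ν₁ ν₁ ≤ (ν₁ Set.univ) ^ 2 * mX := by
        have hsm : (ν₁ Set.univ) • ((ν₁ Set.univ)⁻¹ • ν₁) = ν₁ := by
          rw [smul_smul, mul_inv_cancel₀ haz, one_smul]
        have hm1 : ((ν₁ Set.univ)⁻¹ • ν₁) Set.univ = (1 : ℝ) := by
          rw [mass_smul, inv_mul_cancel₀ haz]
        have hle : en (fun x y => dist x y) ((ν₁ Set.univ)⁻¹ • ν₁) ((ν₁ Set.univ)⁻¹ • ν₁) ≤ mX :=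
          hmX.1 ⟨(ν₁ Set.univ)⁻¹ • ν₁, hm1, rfl⟩
        calc en (fun x y => dist x y) ν₁ ν₁
            = (ν₁ Set.univ) ^ 2
                * en (fun x y => dist x y) ((ν₁ Set.univ)⁻¹ • ν₁) ((ν₁ Set.univ)⁻¹ • ν₁) := by
              conv_lhs => rw [← hsm]
              rw [en_smul]
          _ ≤ (ν₁ Set.univ) ^ 2 * mX := mul_le_mul_of_nonneg_left hle ha2.le
      have hbne : ν₂ Set.univ ≠ 0 := by rw [hbz]; simpa using haz
      have hb2 : (ν₂ Set.univ) ^ 2 = (ν₁ Set.univ) ^ 2 := by rw [hbz]; ring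
      have hI2 : en (fun x y => dist x y) ν₂ ν₂ ≤ (ν₁ Set.univ) ^ 2 * mY := by
        have hsm : (ν₂ Set.univ) • ((ν₂ Set.univ)⁻¹ • ν₂) = ν₂ := by
          rw [smul_smul, mul_inv_cancel₀ hbne, one_smul]
        have hm1 : ((ν₂ Set.univ)⁻¹ • ν₂) Set.univ = (1 : ℝ) := by
          rw [mass_smul, inv_mul_cancel₀ hbne]
        have hle : en (fun x y => dist x y) ((ν₂ Set.univ)⁻¹ • ν₂) ((ν₂ Set.univ)⁻¹ • ν₂) ≤ mY :=
          hmY.1 ⟨(ν₂ Set.univ)⁻¹ • ν₂, hm1, rfl⟩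
        calc en (fun x y => dist x y) ν₂ ν₂
            = (ν₂ Set.univ) ^ 2
                * en (fun x y => dist x y) ((ν₂ Set.univ)⁻¹ • ν₂) ((ν₂ Set.univ)⁻¹ • ν₂) := by
              conv_lhs => rw [← hsm]
              rw [en_smul]
          _ ≤ (ν₂ Set.univ) ^ 2 * mY := mul_le_mul_of_nonneg_left hle (by rw [hb2]; exact ha2.le)
          _ = (ν₁ Set.univ) ^ 2 * mY := by rw [hb2]
      constructor
      · rw [hen, hbz]
        nlinarith
      · intro h0
        rw [hen, hbz] at h0
        have heq : mX + mY = 2 * c := by nlinarith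
        have e1 : en (fun x y => dist x y) ν₁ ν₁ = (ν₁ Set.univ) ^ 2 * mX := by nlinarith
        have e2 : en (fun x y => dist x y) ν₂ ν₂ = (ν₁ Set.univ) ^ 2 * mY := by nlinarith
        rcases hside with h | h | h
        · linarith
        · refine absurd ⟨(ν₁ Set.univ)⁻¹ • ν₁, ?_, ?_⟩ h
          · rw [mass_smul, inv_mul_cancel₀ haz]
          · rw [en_smul, e1]
            field_simp
        · refine absurd ⟨(ν₂ Set.univ)⁻¹ • ν₂, ?_, ?_⟩ h
          · rw [mass_smul, inv_mul_cancel₀ hbne]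
          · rw [en_smul, e2, ← hb2]
            field_simp
end
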